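/- arXiv:1701.04719 — 3 statements merged into one kernel-verified Lean document; each statement's English description precedes it below -/
import Mathlib

section
/- Let n and m be unit vectors in a real inner product space E, and set P = id − n ⊗ n and P_h = id − m ⊗ m (the orthogonal projections onto the orthogonal complements of n and m respectively). Then the operator norm satisfies ‖P − P ∘ P_h ∘ P‖ ≤ 4 ‖n − m‖². (First projector bound of Lemma 4.4: with ‖n^e − n_h‖_{L∞} ≲ h^{k_g} on the surface this gives ‖P_Γ − P_Γ P_{Γ_h} P_Γ‖_{L∞(Γ)} ≲ h^{2k_g}.) -/
open scoped RealInnerProductSpace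

/-- The rank-one operator `a ⊗ b : E → E`, `x ↦ ⟪b, x⟫ • a`. -/
noncomputable def tensor {E : Type*} [NormedAddCommGroup E] [InnerProductSpace ℝ E]
    (a b : E) : E →L[ℝ] E :=
  (innerSL ℝ b).smulRight a

/-- for unit vectors `n`, `m`, with `P = id − n ⊗ n` and
`P_h = id − m ⊗ m`, we have `‖P − P ∘ P_h ∘ P‖ ≤ 4‖n − m‖²`. -/
theorem stmt_2 {E : Type*} [NormedAddCommGroup E] [InnerProductSpace ℝ E]
    (n m : E) (hn : ‖n‖ = 1) (hm : ‖m‖ = 1) :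
    let P : E →L[ℝ] E := ContinuousLinearMap.id ℝ E - tensor n n
    let Ph : E →L[ℝ] E := ContinuousLinearMap.id ℝ E - tensor m m
    ‖P - P ∘L Ph ∘L P‖ ≤ 4 * ‖n - m‖ ^ 2 := by
  intro P Ph
  have hnn : ⟪n, n⟫ = 1 := by
    rw [real_inner_self_eq_norm_sq, hn]; norm_num
  have hPapp : ∀ x, P x = x - ⟪n, x⟫ • n := by
    intro x; simp [P, tensor]
  have hPhapp : ∀ x, Ph x = x - ⟪m, x⟫ • m := by
    intro x; simp [Ph, tensor]
  have hPn : P n = 0 := by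
    rw [hPapp, hnn, one_smul, sub_self]
  have horth : ∀ x, ⟪n, P x⟫ = 0 := by
    intro x
    rw [hPapp, inner_sub_right, real_inner_smul_right, hnn]
    ring
  have hidem : ∀ x, P (P x) = P x := by
    intro x
    rw [hPapp (P x), horth, zero_smul, sub_zero]
  have hsa : ∀ x, ⟪m, P x⟫ = ⟪P m, x⟫ := by
    intro x
    rw [hPapp, hPapp, inner_sub_right, inner_sub_left, real_inner_smul_right,
      real_inner_smul_left, real_inner_comm m n]
    ring
  have key : ∀ x, (P - P ∘L Ph ∘L P) x = ⟪P m, x⟫ • P m := by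
    intro x
    have : (P - P ∘L Ph ∘L P) x = P x - P (Ph (P x)) := rfl
    rw [this, hPhapp (P x), map_sub, hidem, map_smul, hsa, sub_sub_cancel]
  have hPm : ‖P m‖ ≤ 2 * ‖n - m‖ := by
    have h1 : P m = P (m - n) := by rw [map_sub, hPn, sub_zero]
    have htn : ‖tensor n n‖ ≤ 1 := by
      refine ContinuousLinearMap.opNorm_le_bound _ zero_le_one ?_
      intro x
      have : ‖(tensor n n) x‖ = ‖⟪n, x⟫‖ * ‖n‖ := by
        simp [tensor, norm_smul]
      rw [this, hn, mul_one, one_mul]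
      calc ‖⟪n, x⟫‖ = |⟪n, x⟫| := rfl
        _ ≤ ‖n‖ * ‖x‖ := abs_real_inner_le_norm n x
        _ = ‖x‖ := by rw [hn, one_mul]
    have hP : ‖P‖ ≤ 2 := by
      calc ‖P‖ ≤ ‖ContinuousLinearMap.id ℝ E‖ + ‖tensor n n‖ := norm_sub_le _ _
        _ ≤ 1 + 1 := add_le_add ContinuousLinearMap.norm_id_le htn
        _ = 2 := by norm_num
    calc ‖P m‖ = ‖P (m - n)‖ := by rw [h1]
      _ ≤ ‖P‖ * ‖m - n‖ := P.le_opNorm _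
      _ ≤ 2 * ‖m - n‖ := by
          exact mul_le_mul_of_nonneg_right hP (norm_nonneg _)
      _ = 2 * ‖n - m‖ := by rw [norm_sub_rev]
  refine ContinuousLinearMap.opNorm_le_bound _ (by positivity) ?_
  intro x
  rw [key x, norm_smul]
  calc ‖⟪P m, x⟫‖ * ‖P m‖ ≤ (‖P m‖ * ‖x‖) * ‖P m‖ := by
        exact mul_le_mul_of_nonneg_right (abs_real_inner_le_norm _ _) (norm_nonneg _)
    _ = ‖P m‖ ^ 2 * ‖x‖ := by ring
    _ ≤ (2 * ‖n - m‖) ^ 2 * ‖x‖ := by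
        have := pow_le_pow_left₀ (norm_nonneg (P m)) hPm 2
        exact mul_le_mul_of_nonneg_right this (norm_nonneg _)
    _ = 4 * ‖n - m‖ ^ 2 * ‖x‖ := by ring
end

section
/- Let n and m be unit vectors in a real inner product space E, and set P = id − n ⊗ n (the orthogonal projection onto the orthogonal complement of n) and Q_h = m ⊗ m. Then the operator norm satisfies ‖P ∘ Q_h‖ ≤ ‖n − m‖ + (1/2) ‖n − m‖². (Third projector bound of Lemma 4.4: with ‖n^e − n_h‖_{L∞} ≲ h^{k_g} this gives ‖P_Γ Q_{Γ_h}‖_{L∞(Γ_h)} ≲ h^{k_g}.) -/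
open scoped RealInnerProductSpace

lemma tensor_norm_le {E : Type*} [NormedAddCommGroup E] [InnerProductSpace ℝ E]
    (a b : E) : ‖tensor a b‖ ≤ ‖b‖ * ‖a‖ := by
  apply ContinuousLinearMap.opNorm_le_bound _ (by positivity)
  intro x
  simp only [tensor, ContinuousLinearMap.smulRight_apply, innerSL_apply_apply]
  rw [norm_smul]
  calc ‖⟪b, x⟫‖ * ‖a‖ ≤ (‖b‖ * ‖x‖) * ‖a‖ := by
        gcongr; exact (norm_inner_le_norm b x)
    _ = ‖b‖ * ‖a‖ * ‖x‖ := by ring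

/-- for unit vectors `n`, `m`, with `P = id − n ⊗ n` and
`Q_h = m ⊗ m`, we have `‖P ∘ Q_h‖ ≤ ‖n − m‖ + (1/2)‖n − m‖²`. -/
theorem stmt_4 {E : Type*} [NormedAddCommGroup E] [InnerProductSpace ℝ E]
    (n m : E) (hn : ‖n‖ = 1) (hm : ‖m‖ = 1) :
    let P : E →L[ℝ] E := ContinuousLinearMap.id ℝ E - tensor n n
    let Qh : E →L[ℝ] E := tensor m m
    ‖P ∘L Qh‖ ≤ ‖n - m‖ + (1 / 2) * ‖n - m‖ ^ 2 := by
  intro P Qh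
  have hPQ : P ∘L Qh = tensor (m - ⟪n, m⟫ • n) m := by
    ext x
    simp only [P, Qh, tensor, ContinuousLinearMap.comp_apply,
      ContinuousLinearMap.sub_apply, ContinuousLinearMap.id_apply,
      ContinuousLinearMap.smulRight_apply, innerSL_apply_apply, inner_smul_right,
      smul_sub, smul_smul]
  have hip : ⟪n, m⟫ ≤ 1 := by
    calc ⟪n, m⟫ ≤ ‖n‖ * ‖m‖ := real_inner_le_norm n m
      _ = 1 := by rw [hn, hm]; ring
  have hsq : ‖n - m‖ ^ 2 = 2 - 2 * ⟪n, m⟫ := by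
    rw [@norm_sub_sq_real, hn, hm]; ring
  have h1 : ‖m - ⟪n, m⟫ • n‖ ≤ ‖n - m‖ + (1 / 2) * ‖n - m‖ ^ 2 := by
    have : m - ⟪n, m⟫ • n = (m - n) + (1 - ⟪n, m⟫) • n := by
      rw [sub_smul, one_smul]; abel
    rw [this]
    calc ‖(m - n) + (1 - ⟪n, m⟫) • n‖ ≤ ‖m - n‖ + ‖(1 - ⟪n, m⟫) • n‖ := norm_add_le _ _
      _ = ‖n - m‖ + (1 - ⟪n, m⟫) := by
          rw [norm_sub_rev, norm_smul, hn, Real.norm_eq_abs,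
            abs_of_nonneg (by linarith)]; ring
      _ = ‖n - m‖ + (1 / 2) * ‖n - m‖ ^ 2 := by rw [hsq]; ring
  calc ‖P ∘L Qh‖ = ‖tensor (m - ⟪n, m⟫ • n) m‖ := by rw [hPQ]
    _ ≤ ‖m‖ * ‖m - ⟪n, m⟫ • n‖ := tensor_norm_le _ _
    _ = ‖m - ⟪n, m⟫ • n‖ := by rw [hm, one_mul]
    _ ≤ _ := h1
end

section
/- Let H be a real Hilbert space and define, for pairs U = (u, p) and V = (v, q) in H × H, the Masud–Hughes form A(U, V) = ⟪u, v⟫ + ⟪p, v⟫ − ⟪u, q⟫ + (1/2) ⟪u + p, −v + q⟫. Then (i) |A(U, V)| ≤ sqrt(‖u‖² + ‖p‖²) · sqrt(‖v‖² + ‖q‖²) for all U, V; (ii) A(U, U) = (1/2)(‖u‖² + ‖p‖²); and consequently (iii) for every continuous linear functional L on H × H there exists a unique U ∈ H × H such that A(U, V) = L(V) for all V ∈ H × H. (Well-posedness of the Masud–Hughes weak formulation, obtained from boundedness and coercivity via the Lax–Milgram theorem.) -/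
open scoped RealInnerProductSpace

/-- The Masud–Hughes bilinear form on pairs. -/
noncomputable def masudHughes {H : Type*} [NormedAddCommGroup H] [InnerProductSpace ℝ H]
    (U V : H × H) : ℝ :=
  ⟪U.1, V.1⟫ + ⟪U.2, V.1⟫ - ⟪U.1, V.2⟫ + (1 / 2) * ⟪U.1 + U.2, -V.1 + V.2⟫

lemma mh_eq {H : Type*} [NormedAddCommGroup H] [InnerProductSpace ℝ H] (u p v q : H) :
    masudHughes (u, p) (v, q) = (⟪u, v⟫ + ⟪p, v⟫ - ⟪u, q⟫ + ⟪p, q⟫) / 2 := by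
  simp only [masudHughes, inner_add_left, inner_add_right, inner_neg_right]
  ring

/-- boundedness, coercivity and, via Lax–Milgram, well-posedness of
the Masud–Hughes weak formulation. -/
theorem stmt_9 {H : Type*} [NormedAddCommGroup H] [InnerProductSpace ℝ H] [CompleteSpace H] :
    (∀ U V : H × H, |masudHughes U V| ≤
        Real.sqrt (‖U.1‖ ^ 2 + ‖U.2‖ ^ 2) * Real.sqrt (‖V.1‖ ^ 2 + ‖V.2‖ ^ 2)) ∧
    (∀ U : H × H, masudHughes U U = (1 / 2) * (‖U.1‖ ^ 2 + ‖U.2‖ ^ 2)) ∧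
    (∀ L : (H × H) →L[ℝ] ℝ, ∃! U : H × H, ∀ V : H × H, masudHughes U V = L V) := by
  refine ⟨?_, ?_, ?_⟩
  · rintro ⟨u, p⟩ ⟨v, q⟩
    have h1 := abs_real_inner_le_norm u v
    have h2 := abs_real_inner_le_norm p v
    have h3 := abs_real_inner_le_norm u q
    have h4 := abs_real_inner_le_norm p q
    have hb1 := abs_le.mp h1
    have hb2 := abs_le.mp h2
    have hb3 := abs_le.mp h3
    have hb4 := abs_le.mp h4
    have hstep : |masudHughes (u, p) (v, q)| ≤
        (‖u‖ * ‖v‖ + ‖p‖ * ‖v‖ + ‖u‖ * ‖q‖ + ‖p‖ * ‖q‖) / 2 := by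
      rw [mh_eq]
      rw [abs_le]
      constructor <;> [linarith [hb1.1, hb2.1, hb3.2, hb4.1]; linarith [hb1.2, hb2.2, hb3.1, hb4.2]]
    refine hstep.trans ?_
    rw [← Real.sqrt_mul (by positivity)]
    rw [show Real.sqrt ((‖u‖ ^ 2 + ‖p‖ ^ 2) * (‖v‖ ^ 2 + ‖q‖ ^ 2)) =
        Real.sqrt ((‖u‖ ^ 2 + ‖p‖ ^ 2) * (‖v‖ ^ 2 + ‖q‖ ^ 2)) from rfl]
    rw [Real.le_sqrt (by positivity)]
    have n1 : (0:ℝ) ≤ ‖u‖ := norm_nonneg u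
    have n2 : (0:ℝ) ≤ ‖p‖ := norm_nonneg p
    have n3 : (0:ℝ) ≤ ‖v‖ := norm_nonneg v
    have n4 : (0:ℝ) ≤ ‖q‖ := norm_nonneg q
    nlinarith [sq_nonneg (‖u‖ - ‖p‖), sq_nonneg (‖v‖ - ‖q‖), sq_nonneg (‖u‖*‖v‖ - ‖p‖*‖q‖),
      sq_nonneg (‖u‖*‖q‖ - ‖p‖*‖v‖), mul_nonneg (mul_nonneg n1 n2) (mul_nonneg n3 n4),
      sq_nonneg ((‖u‖ - ‖p‖) * (‖v‖ - ‖q‖)), sq_nonneg ((‖u‖ - ‖p‖) * (‖v‖ + ‖q‖)),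
      sq_nonneg ((‖u‖ + ‖p‖) * (‖v‖ - ‖q‖))]
    positivity
  · rintro ⟨u, p⟩
    rw [mh_eq, real_inner_comm p u]
    rw [real_inner_self_eq_norm_sq, real_inner_self_eq_norm_sq]
    ring
  · intro L
    set f₁ : H := (InnerProductSpace.toDual ℝ H).symm (L.comp (ContinuousLinearMap.inl ℝ H H))
      with hf₁
    set f₂ : H := (InnerProductSpace.toDual ℝ H).symm (L.comp (ContinuousLinearMap.inr ℝ H H))
      with hf₂
    have hf₁' : ∀ v : H, ⟪f₁, v⟫ = L (v, 0) := fun v => by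
      rw [hf₁, InnerProductSpace.toDual_symm_apply]; rfl
    have hf₂' : ∀ q : H, ⟪f₂, q⟫ = L (0, q) := fun q => by
      rw [hf₂, InnerProductSpace.toDual_symm_apply]; rfl
    refine ⟨(f₁ - f₂, f₁ + f₂), ?_, ?_⟩
    · rintro ⟨v, q⟩
      rw [mh_eq]
      have hL : L (v, q) = L (v, 0) + L (0, q) := by
        rw [← map_add]
        norm_num
      rw [hL, ← hf₁' v, ← hf₂' q]
      simp only [inner_sub_left, inner_add_left]
      ring
    · rintro ⟨u, p⟩ hU
      have key1 : ∀ v : H, ⟪u + p, v⟫ = ⟪f₁ + f₁, v⟫ := by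
        intro v
        have := hU (v, 0)
        rw [mh_eq] at this
        simp only [inner_zero_right] at this
        have hLv := hf₁' v
        simp only [inner_add_left]
        linarith
      have key2 : ∀ q : H, ⟪p - u, q⟫ = ⟪f₂ + f₂, q⟫ := by
        intro q
        have := hU (0, q)
        rw [mh_eq] at this
        simp only [inner_zero_right] at this
        have hLq := hf₂' q
        simp only [inner_sub_left, inner_add_left]
        linarith
      have e1 : u + p = f₁ + f₁ := by
        have := key1 (u + p - (f₁ + f₁))
        rw [← sub_eq_zero, ← inner_sub_left] at this
        · exact sub_eq_zero.mp (inner_self_eq_zero.mp this)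
      have e2 : p - u = f₂ + f₂ := by
        have := key2 (p - u - (f₂ + f₂))
        rw [← sub_eq_zero, ← inner_sub_left] at this
        · exact sub_eq_zero.mp (inner_self_eq_zero.mp this)
      have hu : u + u = (f₁ - f₂) + (f₁ - f₂) := by
        have : (u + p) - (p - u) = (f₁ + f₁) - (f₂ + f₂) := by rw [e1, e2]
        abel_nf at this ⊢
        convert this using 2
      have hp : p + p = (f₁ + f₂) + (f₁ + f₂) := by
        have : (u + p) + (p - u) = (f₁ + f₁) + (f₂ + f₂) := by rw [e1, e2]
        abel_nf at this ⊢
        convert this using 2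
      have hu' : u = f₁ - f₂ := by
        have h2 : (2 : ℝ) • u = (2 : ℝ) • (f₁ - f₂) := by
          rw [two_smul, two_smul]; exact hu
        exact smul_right_injective H two_ne_zero h2
      have hp' : p = f₁ + f₂ := by
        have h2 : (2 : ℝ) • p = (2 : ℝ) • (f₁ + f₂) := by
          rw [two_smul, two_smul]; exact hp
        exact smul_right_injective H two_ne_zero h2
      exact Prod.ext hu' hp'
end
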